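/- arXiv:0910.1897 — 5 statements merged into one kernel-verified Lean document; each statement's English description precedes it below -/
import Mathlib

section
/- Every topological space X that is first countable, Lindelöf and Hausdorff is squat: every continuous map f : 𝕃₊ → X is eventually constant. -/
noncomputable section

open Set Topology Filter

universe u

/-! ### The long ray and the long line -/

/-- The first uncountable ordinal `ω₁`, viewed as the linearly ordered set of all
countable ordinals. -/
def Omega1 : Type 1 := {o : Ordinal.{0} // o < (Cardinal.aleph 1).ord}

instance : LinearOrder Omega1 :=
  inferInstanceAs (LinearOrder {o : Ordinal.{0} // o < (Cardinal.aleph 1).ord})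

/-- `ω₁` carries the order topology. -/
instance : TopologicalSpace Omega1 := Preorder.topology Omega1

instance : OrderTopology Omega1 := ⟨rfl⟩

/-- The underlying countable ordinal of an element of `ω₁`. -/
def Omega1.toOrdinal : Omega1 → Ordinal.{0} := Subtype.val

/-- The closed long ray `𝕃≥0`: the set `ω₁ × [0,1)` with the lexicographic order and the
order topology. -/
def ClosedLongRay : Type 1 := Omega1 ×ₗ (Set.Ico (0:ℝ) 1)

instance : LinearOrder ClosedLongRay :=
  inferInstanceAs (LinearOrder (Omega1 ×ₗ (Set.Ico (0:ℝ) 1)))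

instance : TopologicalSpace ClosedLongRay := Preorder.topology ClosedLongRay

instance : OrderTopology ClosedLongRay := ⟨rfl⟩

/-- The long ray `𝕃₊`: the closed long ray with its least element removed, with the
subspace topology (an element is non-minimal iff something is below it). -/
def LongRay : Type 1 := {x : ClosedLongRay // ∃ y, y < x}

instance : LinearOrder LongRay :=
  inferInstanceAs (LinearOrder {x : ClosedLongRay // ∃ y, y < x})

instance : TopologicalSpace LongRay :=
  inferInstanceAs (TopologicalSpace {x : ClosedLongRay // ∃ y, y < x})

/-- The inclusion of the long ray into the closed long ray. -/
def LongRay.toCLR : LongRay → ClosedLongRay := Subtype.val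

/-- The long line `𝕃`: an order-reversed copy of `𝕃₊` placed below the closed long ray
`𝕃≥0`, with the order topology. -/
def LongLine : Type 1 := (OrderDual LongRay) ⊕ₗ ClosedLongRay

instance : LinearOrder LongLine :=
  inferInstanceAs (LinearOrder ((OrderDual LongRay) ⊕ₗ ClosedLongRay))

instance : TopologicalSpace LongLine := Preorder.topology LongLine

instance : OrderTopology LongLine := ⟨rfl⟩

/-- The identification of `𝕃₊` with the set of positive elements of `𝕃`. -/
def LongRay.inL (a : LongRay) : LongLine := toLex (Sum.inr a.toCLR)

/-- The natural order-reversing involution `x ↦ -x` of the long line, exchanging the two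
copies of `𝕃₊` and fixing the least element `0` of `𝕃≥0`. -/
noncomputable def LongLine.neg (x : LongLine) : LongLine :=
  match ofLex x with
  | Sum.inl a => toLex (Sum.inr (OrderDual.ofDual a).toCLR)
  | Sum.inr b =>
      @dite _ (∃ y, y < b) (Classical.dec _)
        (fun h => toLex (Sum.inl (OrderDual.toDual (⟨b, h⟩ : LongRay))))
        (fun _ => x)

/-- A subset of the long ray is a *club* if it is closed (in the topology of `𝕃₊`) and
unbounded (i.e. cofinal). -/
def ClubInLongRay (C : Set LongRay) : Prop :=
  IsClosed C ∧ ∀ β : LongRay, ∃ α ∈ C, β ≤ α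

/-- A topological space `X` is *squat* if every continuous map `𝕃₊ → X` is eventually
constant. -/
def Squat (X : Type*) [TopologicalSpace X] : Prop :=
  ∀ f : LongRay → X, Continuous f → ∃ (β : LongRay) (x : X), ∀ α, β ≤ α → f α = x

/-! ### Manifolds and foliations -/

/-- A (topological) `n`-manifold: a nonempty Hausdorff space in which every point has an
open neighbourhood homeomorphic to `ℝⁿ`. -/
def IsTopManifold (M : Type u) [TopologicalSpace M] (n : ℕ) : Prop :=
  Nonempty M ∧ T2Space M ∧
    ∀ x : M, ∃ U : Set M, x ∈ U ∧ IsOpen U ∧ Nonempty (U ≃ₜ (Fin n → ℝ))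

/-- A foliation of dimension `p` and codimension `q` on a space `M`: a family of charts
`φᵢ : Uᵢ ≃ₜ ℝᵖ × ℝ^q` on open sets covering `M` such that all coordinate transformations
have the form `(x, y) ↦ (g (x, y), h y)`, i.e. the last `q` coordinates of the image
depend only on the last `q` coordinates of the argument. -/
structure Foliation (M : Type u) [TopologicalSpace M] (p q : ℕ) where
  /-- index type of the atlas -/
  ι : Type u
  /-- chart domains -/
  U : ι → Set M
  /-- the charts -/
  chart : (i : ι) → ((U i) ≃ₜ ((Fin p → ℝ) × (Fin q → ℝ)))
  isOpen : ∀ i, IsOpen (U i)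
  covers : ∀ x : M, ∃ i, x ∈ U i
  compat : ∀ i j (x y : M) (hxi : x ∈ U i) (hxj : x ∈ U j) (hyi : y ∈ U i) (hyj : y ∈ U j),
    (chart i ⟨x, hxi⟩).2 = (chart i ⟨y, hyi⟩).2 → (chart j ⟨x, hxj⟩).2 = (chart j ⟨y, hyj⟩).2

namespace Foliation

variable {M : Type u} [TopologicalSpace M] {p q : ℕ}

/-- The set `φᵢ⁻¹ (ℝᵖ × {y})` in the chart domain `Uᵢ`. -/
def plaqueFibre (F : Foliation M p q) (i : F.ι) (y : Fin q → ℝ) : Set M :=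
  {w : M | ∃ hw : w ∈ F.U i, (F.chart i ⟨w, hw⟩).2 = y}

/-- A *plaque* of the foliation: a connected component of a set of the form
`φᵢ⁻¹ (ℝᵖ × {y})`. -/
def IsPlaque (F : Foliation M p q) (P : Set M) : Prop :=
  ∃ (i : F.ι) (y : Fin q → ℝ) (z : M), z ∈ F.plaqueFibre i y ∧
    P = connectedComponentIn (F.plaqueFibre i y) z

/-- Two points lie in a common plaque. -/
def samePlaque (F : Foliation M p q) (x y : M) : Prop :=
  ∃ P, F.IsPlaque P ∧ x ∈ P ∧ y ∈ P

/-- The leaf relation: the smallest equivalence relation relating any two points that lie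
in a common plaque. -/
def leafRel (F : Foliation M p q) : M → M → Prop := Relation.EqvGen F.samePlaque

/-- The *leaves* of the foliation: equivalence classes of the leaf relation. -/
def IsLeaf (F : Foliation M p q) (L : Set M) : Prop :=
  ∃ x : M, L = {y | F.leafRel x y}

/-- The *leaf topology* on a leaf (or any subset) `L`: the topology generated by the
plaques contained in `L`. -/
def leafTopology (F : Foliation M p q) (L : Set M) : TopologicalSpace L :=
  TopologicalSpace.generateFrom
    {s : Set L | ∃ P, F.IsPlaque P ∧ P ⊆ L ∧ s = Subtype.val ⁻¹' P}

/-- A leaf is *long* if it is not metrisable in its leaf topology. -/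
def IsLongLeaf (F : Foliation M p q) (L : Set M) : Prop :=
  F.IsLeaf L ∧ ¬ @TopologicalSpace.MetrizableSpace L (F.leafTopology L)

/-- A subset of `M` is *saturated* by the foliation if it is a union of leaves. -/
def Saturated (F : Foliation M p q) (S : Set M) : Prop :=
  ∀ x ∈ S, ∀ y, F.leafRel x y → y ∈ S

end Foliation

/-! ### Auxiliary lemmas for statement 4 -/

namespace Statement4Aux

lemma succ_lt_omega1 {o : Ordinal.{0}} (h : o < (Cardinal.aleph 1).ord) :
    o + 1 < (Cardinal.aleph 1).ord := by
  rw [Ordinal.add_one_eq_succ]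
  exact (Cardinal.isSuccLimit_ord (Cardinal.aleph0_le_aleph 1)).succ_lt h

lemma iSup_lt_omega1 (o : ℕ → Ordinal.{0}) (ho : ∀ j, o j < (Cardinal.aleph 1).ord) :
    (⨆ j, o j) < (Cardinal.aleph 1).ord := by
  apply Cardinal.iSup_lt_ord_lift_of_isRegular Cardinal.isRegular_aleph_one ?_ ho
  simpa using Cardinal.aleph0_lt_aleph_one

lemma exists_bound_omega1 (o : ℕ → Omega1) : ∃ σ : Omega1, ∀ j, o j < σ := by
  have h1 : (⨆ j, (o j).1) < (Cardinal.aleph 1).ord :=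
    iSup_lt_omega1 _ (fun j => (o j).2)
  refine ⟨Subtype.mk ((⨆ j, (o j).1) + 1) (succ_lt_omega1 h1), fun j => ?_⟩
  have h2 : (o j).1 ≤ ⨆ j, (o j).1 := Ordinal.le_iSup _ j
  have : (o j).1 < (⨆ j, (o j).1) + 1 := by
    rw [Ordinal.add_one_eq_succ]
    exact h2.trans_lt (Order.lt_succ _)
  exact this

/-- `0` as an element of `[0,1)`. -/
def zeroIco : Set.Ico (0:ℝ) 1 := ⟨0, le_refl 0, zero_lt_one⟩

lemma exists_bound_longRay (s : ℕ → LongRay) : ∃ B : LongRay, ∀ j, s j ≤ B := by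
  obtain ⟨σ, hσ⟩ := exists_bound_omega1 (fun j => (ofLex (s j).1).1)
  have hlt : ∀ j, (s j).1 < toLex (σ, zeroIco) := by
    intro j
    exact (@Prod.Lex.toLex_lt_toLex _ _ _ _ (ofLex (s j).1) (σ, zeroIco)).mpr (Or.inl (hσ j))
  exact ⟨⟨toLex (σ, zeroIco), ⟨(s 0).1, hlt 0⟩⟩, fun j => le_of_lt (hlt j)⟩

lemma zero_lt_omega1 : (0 : Ordinal.{0}) < (Cardinal.aleph 1).ord := by
  rw [Cardinal.lt_ord]
  simpa using Cardinal.aleph0_pos.trans Cardinal.aleph0_lt_aleph_one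

lemma one_lt_omega1 : (1 : Ordinal.{0}) < (Cardinal.aleph 1).ord := by
  rw [Cardinal.lt_ord]
  simpa using Cardinal.one_lt_aleph0.trans Cardinal.aleph0_lt_aleph_one

/-- `0` and `1` as elements of `ω₁`. -/
def oZero : Omega1 := Subtype.mk 0 zero_lt_omega1

def oOne : Omega1 := Subtype.mk 1 one_lt_omega1

lemma oZero_lt_oOne : oZero < oOne := Subtype.mk_lt_mk.mpr zero_lt_one

lemma longRay_nonempty : Nonempty LongRay := by
  refine ⟨⟨toLex (oOne, zeroIco), toLex (oZero, zeroIco), ?_⟩⟩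
  exact (@Prod.Lex.toLex_lt_toLex _ _ _ _ (oZero, zeroIco) (oOne, zeroIco)).mpr (Or.inl oZero_lt_oOne)

lemma exists_isLUB (c : ℕ → ClosedLongRay) : ∃ γ : ClosedLongRay, IsLUB (Set.range c) γ := by
  set o : ℕ → Ordinal.{0} := fun j => (ofLex (c j)).1.1 with ho
  set σ : Ordinal.{0} := ⨆ j, o j with hσdef
  have hσ : σ < (Cardinal.aleph 1).ord := iSup_lt_omega1 o (fun j => (ofLex (c j)).1.2)
  have hole : ∀ j, o j ≤ σ := fun j => Ordinal.le_iSup o j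
  set σO : Omega1 := Subtype.mk σ hσ with hσO
  have key1 : ∀ u : ClosedLongRay, (∀ j, c j ≤ u) → σ ≤ (ofLex u).1.1 := by
    intro u hu
    refine ciSup_le fun j => ?_
    rcases (@Prod.Lex.toLex_le_toLex _ _ _ _ (ofLex (c j)) (ofLex u)).mp (hu j) with h | h
    · exact le_of_lt h
    · exact le_of_eq (congrArg Subtype.val h.1)
  by_cases hA : ∃ j, o j = σ
  · obtain ⟨j₀, hj₀⟩ := hA
    set ρ : ℝ := ⨆ j : {j // o j = σ}, ((ofLex (c j.1)).2.1 : ℝ) with hρdef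
    have hbdd : BddAbove (Set.range fun j : {j // o j = σ} => ((ofLex (c j.1)).2.1 : ℝ)) := by
      refine ⟨1, ?_⟩
      rintro r ⟨j, rfl⟩
      exact le_of_lt (ofLex (c j.1)).2.2.2
    have hne : Nonempty {j // o j = σ} := ⟨⟨j₀, hj₀⟩⟩
    have hρ_le : ∀ j : {j // o j = σ}, ((ofLex (c j.1)).2.1 : ℝ) ≤ ρ := fun j => le_ciSup hbdd j
    have hρ0 : (0:ℝ) ≤ ρ := le_trans (ofLex (c j₀)).2.2.1 (hρ_le ⟨j₀, hj₀⟩)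
    have key2 : ∀ u : ClosedLongRay, (∀ j, c j ≤ u) → σ = (ofLex u).1.1 →
        ρ ≤ (ofLex u).2.1 := by
      intro u hu h
      refine ciSup_le fun j => ?_
      rcases (@Prod.Lex.toLex_le_toLex _ _ _ _ (ofLex (c j.1)) (ofLex u)).mp (hu j.1) with hh | hh
      swap
      · exact hh.2
      · exfalso
        have h2 : o j.1 < (ofLex u).1.1 := hh
        rw [j.2, ← h] at h2
        exact lt_irrefl _ h2
    by_cases hρ : ρ < 1
    · refine ⟨toLex (σO, ⟨ρ, hρ0, hρ⟩), ?_, ?_⟩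
      · rintro x ⟨j, rfl⟩
        rcases lt_or_eq_of_le (hole j) with h | h
        · exact le_of_lt ((@Prod.Lex.toLex_lt_toLex _ _ _ _ (ofLex (c j)) (σO, ⟨ρ, hρ0, hρ⟩)).mpr (Or.inl h))
        · refine (@Prod.Lex.toLex_le_toLex _ _ _ _ (ofLex (c j)) (σO, ⟨ρ, hρ0, hρ⟩)).mpr (Or.inr ⟨Subtype.ext h, ?_⟩)
          exact hρ_le ⟨j, h⟩
      · rintro u hu
        have hu' : ∀ j, c j ≤ u := fun j => hu ⟨j, rfl⟩
        rcases lt_or_eq_of_le (key1 u hu') with h | h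
        · exact le_of_lt ((@Prod.Lex.toLex_lt_toLex _ _ _ _ (σO, ⟨ρ, hρ0, hρ⟩) (ofLex u)).mpr (Or.inl h))
        · exact (@Prod.Lex.toLex_le_toLex _ _ _ _ (σO, ⟨ρ, hρ0, hρ⟩) (ofLex u)).mpr
            (Or.inr ⟨Subtype.ext h, key2 u hu' h⟩)
    · refine ⟨toLex (Subtype.mk (σ + 1) (succ_lt_omega1 hσ), zeroIco), ?_, ?_⟩
      · rintro x ⟨j, rfl⟩
        refine le_of_lt ((@Prod.Lex.toLex_lt_toLex _ _ _ _ (ofLex (c j))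
          (Subtype.mk (σ + 1) (succ_lt_omega1 hσ), zeroIco)).mpr (Or.inl ?_))
        have : o j < σ + 1 := by
          rw [Ordinal.add_one_eq_succ]
          exact (hole j).trans_lt (Order.lt_succ _)
        exact this
      · rintro u hu
        have hu' : ∀ j, c j ≤ u := fun j => hu ⟨j, rfl⟩
        rcases lt_or_eq_of_le (key1 u hu') with h | h
        · have hs : σ + 1 ≤ (ofLex u).1.1 := by
            rw [Ordinal.add_one_eq_succ]
            exact Order.succ_le_of_lt h
          rcases lt_or_eq_of_le hs with h' | h'
          · exact le_of_lt ((@Prod.Lex.toLex_lt_toLex Omega1 _ _ _ (Subtype.mk (σ + 1) (succ_lt_omega1 hσ), zeroIco)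
              (ofLex u)).mpr (Or.inl h'))
          · exact (@Prod.Lex.toLex_le_toLex Omega1 _ _ _ (Subtype.mk (σ + 1) (succ_lt_omega1 hσ), zeroIco)
              (ofLex u)).mpr (Or.inr ⟨Subtype.ext h', (ofLex u).2.2.1⟩)
        · exact absurd (lt_of_le_of_lt (key2 u hu' h) (ofLex u).2.2.2) hρ
  · refine ⟨toLex (σO, zeroIco), ?_, ?_⟩
    · rintro x ⟨j, rfl⟩
      refine le_of_lt ((@Prod.Lex.toLex_lt_toLex _ _ _ _ (ofLex (c j)) (σO, zeroIco)).mpr (Or.inl ?_))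
      have : o j < σ := lt_of_le_of_ne (hole j) (fun h => hA ⟨j, h⟩)
      exact this
    · rintro u hu
      have hu' : ∀ j, c j ≤ u := fun j => hu ⟨j, rfl⟩
      rcases lt_or_eq_of_le (key1 u hu') with h | h
      · exact le_of_lt ((@Prod.Lex.toLex_lt_toLex _ _ _ _ (σO, zeroIco) (ofLex u)).mpr (Or.inl h))
      · exact (@Prod.Lex.toLex_le_toLex _ _ _ _ (σO, zeroIco) (ofLex u)).mpr
          (Or.inr ⟨Subtype.ext h, (ofLex u).2.2.1⟩)

end Statement4Aux

/-- Every first countable, Lindelöf, Hausdorff space is squat: every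
continuous map `𝕃₊ → X` is eventually constant. -/
theorem statement4 (X : Type*) [TopologicalSpace X]
    [FirstCountableTopology X] [LindelofSpace X] [T2Space X] :
    Squat X := by
  intro f hf
  obtain ⟨q0⟩ := Statement4Aux.longRay_nonempty
  -- Step 1: a cluster point of `f` "at infinity", via Lindelöf
  obtain ⟨x, hx⟩ : ∃ x : X, ∀ β : LongRay, x ∈ closure (f '' Ici β) := by
    by_contra h
    push_neg at h
    choose β hβ using h
    obtain ⟨t, htc, htcov⟩ := isLindelof_univ.elim_countable_subcover
      (fun x : X => (closure (f '' Ici (β x)))ᶜ)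
      (fun x => isClosed_closure.isOpen_compl)
      (fun y _ => mem_iUnion.2 ⟨y, hβ y⟩)
    rcases t.eq_empty_or_nonempty with rfl | htne
    · simpa using htcov (mem_univ (f q0))
    · obtain ⟨g, hg⟩ := htc.exists_eq_range htne
      obtain ⟨B, hB⟩ := Statement4Aux.exists_bound_longRay (fun m => β (g m))
      have hmem : f B ∈ ⋃ y ∈ t, (closure (f '' Ici (β y)))ᶜ := htcov (mem_univ _)
      rcases mem_iUnion₂.mp hmem with ⟨y, hyt, hymem⟩
      rw [hg] at hyt
      rcases hyt with ⟨m, rfl⟩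
      exact hymem (subset_closure ⟨B, hB m, rfl⟩)
  -- Step 2: an antitone neighbourhood basis at `x`
  obtain ⟨U, hU⟩ := (𝓝 x).exists_antitone_basis
  have hUx : ∀ n, U n ∈ 𝓝 x := fun n => hU.1.mem_of_mem trivial
  have hin : ∀ (n : ℕ) (β : LongRay), ∃ α, β ≤ α ∧ f α ∈ U n := by
    intro n β
    rcases mem_closure_iff_nhds.mp (hx β) (U n) (hUx n) with ⟨y, hy1, hy2⟩
    rcases hy2 with ⟨α, hα, rfl⟩
    exact ⟨α, hα, hy1⟩
  -- Step 3: each tail is eventually inside each `U n`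
  have key : ∀ n : ℕ, ∃ β : LongRay, ∀ α, β ≤ α → f α ∈ U n := by
    intro n
    by_contra hcon
    push_neg at hcon
    choose g1 hg1a hg1b using hin
    choose g2 hg2a hg2b using hcon
    let p : ℕ → LongRay × LongRay :=
      fun k => Nat.rec (⟨g1 0 q0, g2 (g1 0 q0)⟩)
        (fun k ih => ⟨g1 (k+1) ih.2, g2 (g1 (k+1) ih.2)⟩) k
    have hp1 : ∀ k, (p k).1 ≤ (p k).2 := by
      intro k
      cases k <;> exact hg2a _
    have hp2 : ∀ k, (p k).2 ≤ (p (k+1)).1 := fun k => hg1a (k+1) _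
    have hpU : ∀ k, f ((p k).1) ∈ U k := by
      intro k
      cases k with
      | zero => exact hg1b 0 q0
      | succ k => exact hg1b (k+1) _
    have hpN : ∀ k, f ((p k).2) ∉ U n := by
      intro k
      cases k <;> exact hg2b _
    let e : ℕ → LongRay := fun j => if j % 2 = 0 then (p (j / 2)).1 else (p (j / 2)).2
    have he1 : ∀ m, e (2 * m) = (p m).1 := by
      intro m
      have h1 : (2 * m) % 2 = 0 := by omega
      have h2 : (2 * m) / 2 = m := by omega
      simp only [e, h1, h2, if_pos]
    have he2 : ∀ m, e (2 * m + 1) = (p m).2 := by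
      intro m
      have h1 : (2 * m + 1) % 2 = 1 := by omega
      have h2 : (2 * m + 1) / 2 = m := by omega
      simp only [e, h1, h2]
      norm_num
    have hemono : Monotone e := by
      apply monotone_nat_of_le_succ
      intro j
      by_cases hj : j % 2 = 0
      · obtain ⟨m, rfl⟩ : ∃ m, j = 2 * m := ⟨j / 2, by omega⟩
        rw [he1, he2]
        exact hp1 m
      · obtain ⟨m, rfl⟩ : ∃ m, j = 2 * m + 1 := ⟨j / 2, by omega⟩
        rw [he2, show 2 * m + 1 + 1 = 2 * (m + 1) by ring, he1]
        exact hp2 m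
    obtain ⟨γ, hγ⟩ := Statement4Aux.exists_isLUB (fun j => (e j).1)
    have hmono' : Monotone (fun j => (e j).1) := fun a b h => hemono h
    have htend : Tendsto (fun j => (e j).1) atTop (𝓝 γ) := tendsto_atTop_isLUB hmono' hγ
    have hγge : (e 0).1 ≤ γ := hγ.1 ⟨0, rfl⟩
    have hwit : ∃ y, y < γ := ⟨(e 0).2.choose, lt_of_lt_of_le (e 0).2.choose_spec hγge⟩
    have htendL : Tendsto e atTop (𝓝 (⟨γ, hwit⟩ : LongRay)) := tendsto_subtype_rng.mpr htend
    have hft : Tendsto (fun j => f (e j)) atTop (𝓝 (f ⟨γ, hwit⟩)) :=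
      (hf.tendsto _).comp htendL
    have h2m : Tendsto (fun m : ℕ => 2 * m) atTop atTop :=
      tendsto_atTop_mono (f := fun m : ℕ => m) (fun m => (by omega : m ≤ 2 * m)) tendsto_id
    have h2m1 : Tendsto (fun m : ℕ => 2 * m + 1) atTop atTop :=
      tendsto_atTop_mono (f := fun m : ℕ => m) (fun m => (by omega : m ≤ 2 * m + 1)) tendsto_id
    have heven : Tendsto (fun m => f ((p m).1)) atTop (𝓝 (f ⟨γ, hwit⟩)) := by
      have h := hft.comp h2m
      simpa only [Function.comp_def, he1] using h
    have hodd : Tendsto (fun m => f ((p m).2)) atTop (𝓝 (f ⟨γ, hwit⟩)) := by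
      have h := hft.comp h2m1
      simpa only [Function.comp_def, he2] using h
    have hx' : Tendsto (fun m => f ((p m).1)) atTop (𝓝 x) := hU.tendsto hpU
    have hfγ : f ⟨γ, hwit⟩ = x := tendsto_nhds_unique heven hx'
    rw [hfγ] at hodd
    rcases (hodd.eventually_mem (hUx n)).exists with ⟨m, hm⟩
    exact hpN m hm
  -- Step 4: conclude
  choose b hb using key
  obtain ⟨B, hB⟩ := Statement4Aux.exists_bound_longRay b
  refine ⟨B, x, fun α hα => ?_⟩
  by_contra hne
  have hV : ({f α}ᶜ : Set X) ∈ 𝓝 x := compl_singleton_mem_nhds (Ne.symm hne)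
  rcases hU.1.mem_iff.mp hV with ⟨m, -, hsub⟩
  exact hsub (hb m α (le_trans (hB m) hα)) rfl
end
end

section
/- Let X be a first countable, Lindelöf, Hausdorff topological space and let C ⊆ 𝕃₊ × X be a closed subset that is 𝕃₊-unbounded, i.e. its projection to the 𝕃₊-factor is cofinal in 𝕃₊. Then there exists x ∈ X such that C ∩ (𝕃₊ × {x}) is 𝕃₊-unbounded. -/
noncomputable section

open Set Topology Filter

universe u

/-! ### Auxiliary facts about the long ray, for the proof of Statement 5 -/

namespace Statement5Aux

open Cardinal Ordinal in
lemma omega1_isLimit : Order.IsSuccLimit ((Cardinal.aleph 1).ord) :=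
  Cardinal.isSuccLimit_ord (Cardinal.aleph0_le_aleph 1)

lemma omega1_pos : (0 : Ordinal.{0}) < (Cardinal.aleph 1).ord := omega1_isLimit.pos

/-- The ordinal part of a point of the long ray. -/
def ordOf (a : LongRay) : Ordinal.{0} := Omega1.toOrdinal (ofLex a.1).1

lemma ordOf_lt_omega1 (a : LongRay) : ordOf a < (Cardinal.aleph 1).ord :=
  (ofLex a.1).1.2

/-- The point `(o, 0)` of the closed long ray. -/
def mkCLR (o : Ordinal.{0}) (ho : o < (Cardinal.aleph 1).ord) : ClosedLongRay :=
  toLex (⟨o, ho⟩, ⟨0, ⟨le_refl 0, one_pos⟩⟩)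

lemma clr_le_iff (a b : ClosedLongRay) :
    a ≤ b ↔ (ofLex a).1 < (ofLex b).1 ∨ ((ofLex a).1 = (ofLex b).1 ∧ (ofLex a).2 ≤ (ofLex b).2) :=
  Prod.lex_def

lemma clr_lt_iff (a b : ClosedLongRay) :
    a < b ↔ (ofLex a).1 < (ofLex b).1 ∨ ((ofLex a).1 = (ofLex b).1 ∧ (ofLex a).2 < (ofLex b).2) :=
  Prod.lex_def

/-- The point `(o, 0)` of the long ray, for `o > 0`. -/
def mkLR (o : Ordinal.{0}) (ho : o < (Cardinal.aleph 1).ord) (hpos : 0 < o) : LongRay :=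
  ⟨mkCLR o ho, ⟨mkCLR 0 omega1_pos, by
    rw [clr_lt_iff]
    exact Or.inl (by exact hpos)⟩⟩

lemma ordOf_mkLR (o : Ordinal.{0}) (ho : o < (Cardinal.aleph 1).ord) (hpos : 0 < o) :
    ordOf (mkLR o ho hpos) = o := rfl

lemma ordOf_mono {a b : LongRay} (h : a ≤ b) : ordOf a ≤ ordOf b := by
  have h' : a.1 ≤ b.1 := h
  rcases (clr_le_iff a.1 b.1).mp h' with h1 | h1
  · exact le_of_lt h1
  · exact le_of_eq (congrArg Omega1.toOrdinal h1.1)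

lemma lt_of_ordOf_lt {a b : LongRay} (h : ordOf a < ordOf b) : a < b := by
  have : a.1 < b.1 := (clr_lt_iff a.1 b.1).mpr (Or.inl h)
  exact this

lemma mkLR_le {o : Ordinal.{0}} {ho hpos} {b : LongRay} (h : o ≤ ordOf b) :
    mkLR o ho hpos ≤ b := by
  rcases lt_or_eq_of_le h with h1 | h1
  · exact le_of_lt (lt_of_ordOf_lt (by rwa [ordOf_mkLR]))
  · show (mkLR o ho hpos).1 ≤ b.1
    rw [clr_le_iff]
    refine Or.inr ⟨Subtype.ext h1, ?_⟩
    exact Subtype.coe_le_coe.mp ((ofLex b.1).2.2.1)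

/-- Successor bump on the long ray: `(o, t) ↦ (o + 1, 0)`. -/
def bump (a : LongRay) : LongRay :=
  mkLR (ordOf a + 1)
    (by rw [Ordinal.add_one_eq_succ]; exact omega1_isLimit.succ_lt (ordOf_lt_omega1 a))
    (lt_of_le_of_lt zero_le (lt_add_one _))

lemma lt_bump (a : LongRay) : a < bump a :=
  lt_of_ordOf_lt (by rw [bump, ordOf_mkLR]; exact lt_add_one _)

lemma ordOf_lt_of_bump_le {a b : LongRay} (h : bump a ≤ b) : ordOf a < ordOf b :=
  lt_of_lt_of_le (lt_add_one _) (by simpa [bump, ordOf_mkLR] using ordOf_mono h)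

/-- Countable subsets of the long ray are bounded. -/
lemma countable_bounded (g : ℕ → LongRay) : ∃ b : LongRay, ∀ n, g n ≤ b := by
  set γ : Ordinal.{0} := (⨆ n, ordOf (g n)) + 1 with hγdef
  have hsup : (⨆ n, ordOf (g n)) < (Cardinal.aleph 1).ord :=
    Cardinal.ord_aleph 1 ▸ Ordinal.iSup_lt_omega_one (fun n => Cardinal.ord_aleph 1 ▸ ordOf_lt_omega1 (g n))
  have hγ : γ < (Cardinal.aleph 1).ord := by
    rw [hγdef, Ordinal.add_one_eq_succ]; exact omega1_isLimit.succ_lt hsup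
  have hpos : 0 < γ := lt_of_le_of_lt zero_le (lt_add_one _)
  refine ⟨mkLR γ hγ hpos, fun n => ?_⟩
  have : ordOf (g n) < γ := lt_of_le_of_lt (Ordinal.le_iSup _ n) (lt_add_one _)
  exact le_of_lt (lt_of_ordOf_lt (by rwa [ordOf_mkLR]))

/-- A sequence in the long ray with strictly increasing ordinal parts has a least upper
bound. -/
lemma exists_isLUB (f : ℕ → LongRay) (hf : ∀ n, ordOf (f n) < ordOf (f (n + 1))) :
    ∃ a : LongRay, IsLUB (Set.range f) a := by
  set γ : Ordinal.{0} := ⨆ n, ordOf (f n) with hγdef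
  have hγ : γ < (Cardinal.aleph 1).ord :=
    Cardinal.ord_aleph 1 ▸ Ordinal.iSup_lt_omega_one (fun n => Cardinal.ord_aleph 1 ▸ ordOf_lt_omega1 (f n))
  have hpos : 0 < γ :=
    lt_of_le_of_lt zero_le (lt_of_lt_of_le (hf 0) (Ordinal.le_iSup _ 1))
  refine ⟨mkLR γ hγ hpos, ?_, ?_⟩
  · rintro _ ⟨n, rfl⟩
    have : ordOf (f n) < γ := lt_of_lt_of_le (hf n) (Ordinal.le_iSup _ (n + 1))
    exact le_of_lt (lt_of_ordOf_lt (by rwa [ordOf_mkLR]))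
  · intro b hb
    have : γ ≤ ordOf b := Ordinal.iSup_le fun n => ordOf_mono (hb ⟨n, rfl⟩)
    exact mkLR_le this

instance : Set.OrdConnected {x : ClosedLongRay | ∃ y, y < x} := by
  constructor
  rintro a ⟨y, hy⟩ b - c hc
  exact ⟨y, lt_of_lt_of_le hy hc.1⟩

instance : OrderTopology LongRay :=
  inferInstanceAs (OrderTopology {x : ClosedLongRay | ∃ y, y < x})

/-- The key per-point lemma: if near `x` there are points of `C` with arbitrarily large
long-ray coordinate, then the fibre of `C` over `x` is unbounded. -/
lemma key {X : Type*} [TopologicalSpace X] [FirstCountableTopology X]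
    (C : Set (LongRay × X)) (hC : IsClosed C) (x : X)
    (H : ∀ U ∈ 𝓝 x, ∀ β : LongRay, ∃ p : LongRay × X, p ∈ C ∧ β ≤ p.1 ∧ p.2 ∈ U) :
    ∀ β : LongRay, ∃ α : LongRay, β ≤ α ∧ (α, x) ∈ C := by
  obtain ⟨u, hu⟩ := (𝓝 x).exists_antitone_basis
  intro β
  have step : ∀ (b : LongRay) (n : ℕ), ∃ p : LongRay × X, p ∈ C ∧ b ≤ p.1 ∧ p.2 ∈ u n :=
    fun b n => H (u n) (hu.1.mem_of_mem trivial) b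
  let F : ℕ → LongRay × X := fun n =>
    Nat.rec (Classical.choose (step β 0))
      (fun n p => Classical.choose (step (bump p.1) (n + 1))) n
  have hF0 : F 0 = Classical.choose (step β 0) := rfl
  have hFs : ∀ n, F (n + 1) = Classical.choose (step (bump (F n).1) (n + 1)) := fun n => rfl
  have hmem : ∀ n, F n ∈ C := by
    intro n
    cases n with
    | zero => exact (Classical.choose_spec (step β 0)).1
    | succ m => rw [hFs m]; exact (Classical.choose_spec (step (bump (F m).1) (m + 1))).1
  have hun : ∀ n, (F n).2 ∈ u n := by
    intro n
    cases n with
    | zero => exact (Classical.choose_spec (step β 0)).2.2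
    | succ m => rw [hFs m]; exact (Classical.choose_spec (step (bump (F m).1) (m + 1))).2.2
  have hβ : β ≤ (F 0).1 := (Classical.choose_spec (step β 0)).2.1
  have hord : ∀ n, ordOf (F n).1 < ordOf (F (n + 1)).1 := by
    intro n
    apply ordOf_lt_of_bump_le
    rw [hFs n]
    exact (Classical.choose_spec (step (bump (F n).1) (n + 1))).2.1
  obtain ⟨a, hlub⟩ := exists_isLUB (fun n => (F n).1) hord
  have hmono : Monotone fun n => (F n).1 :=
    (strictMono_nat_of_lt_succ fun n => lt_of_ordOf_lt (hord n)).monotone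
  have h1 : Filter.Tendsto (fun n => (F n).1) Filter.atTop (𝓝 a) :=
    tendsto_atTop_isLUB hmono hlub
  have h2 : Filter.Tendsto (fun n => (F n).2) Filter.atTop (𝓝 x) := hu.tendsto hun
  have h3 : Filter.Tendsto F Filter.atTop (𝓝 (a, x)) := h1.prodMk_nhds h2
  have hax : (a, x) ∈ C := hC.mem_of_tendsto h3 (Filter.Eventually.of_forall hmem)
  exact ⟨a, le_trans hβ (hlub.1 ⟨0, rfl⟩), hax⟩

end Statement5Aux

/-- If `X` is first countable, Lindelöf and Hausdorff and
`C ⊆ 𝕃₊ × X` is closed and `𝕃₊`-unbounded, then there is `x ∈ X` such that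
`C ∩ (𝕃₊ × {x})` is `𝕃₊`-unbounded. -/
theorem statement5 (X : Type*) [TopologicalSpace X]
    [FirstCountableTopology X] [LindelofSpace X] [T2Space X]
    (C : Set (LongRay × X)) (hC : IsClosed C)
    (hub : ∀ β : LongRay, ∃ c ∈ C, β ≤ c.1) :
    ∃ x : X, ∀ β : LongRay, ∃ α : LongRay, β ≤ α ∧ (α, x) ∈ C := by
  by_contra hcon
  push_neg at hcon
  -- For each `x`, there is a neighbourhood `U x` and a bound `b x` beyond which `C`
  -- avoids `LongRay × U x`.
  have tube : ∀ x : X, ∃ U ∈ 𝓝 x, ∃ b : LongRay,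
      ∀ p : LongRay × X, p ∈ C → b ≤ p.1 → p.2 ∉ U := by
    intro x
    by_contra h
    push_neg at h
    have H : ∀ U ∈ 𝓝 x, ∀ β : LongRay, ∃ p : LongRay × X, p ∈ C ∧ β ≤ p.1 ∧ p.2 ∈ U := by
      intro U hU β
      obtain ⟨p, hp1, hp2, hp3⟩ := h U hU β
      exact ⟨p, hp1, hp2, hp3⟩
    obtain ⟨β, hβ⟩ := hcon x
    obtain ⟨α, hα1, hα2⟩ := Statement5Aux.key C hC x H β
    exact hβ α hα1 hα2
  choose U hU b hb using tube
  -- Extract a countable subcover.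
  obtain ⟨t, htc, htcov⟩ := LindelofSpace.elim_nhds_subcover U hU
  -- `X` (hence `t`) is nonempty since `C` is.
  obtain ⟨c0, hc0C, -⟩ :=
    hub (Statement5Aux.mkLR 1 (Ordinal.one_lt_of_isSuccLimit Statement5Aux.omega1_isLimit) one_pos)
  have htne : t.Nonempty := by
    have : c0.2 ∈ ⋃ x ∈ t, U x := htcov ▸ Set.mem_univ _
    obtain ⟨x, hx, -⟩ := Set.mem_iUnion₂.mp this
    exact ⟨x, hx⟩
  obtain ⟨f, hf⟩ := htc.exists_eq_range htne
  -- A common bound for the countably many `b (f n)`.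
  obtain ⟨B, hB⟩ := Statement5Aux.countable_bounded fun n => b (f n)
  -- Contradiction with unboundedness of `C`.
  obtain ⟨c, hcC, hcB⟩ := hub B
  have : c.2 ∈ ⋃ x ∈ t, U x := htcov ▸ Set.mem_univ _
  obtain ⟨x, hx, hcx⟩ := Set.mem_iUnion₂.mp this
  obtain ⟨n, rfl⟩ : ∃ n, f n = x := by
    have := hf ▸ hx
    exact this
  exact hb (f n) c hcC (le_trans (hB n) hcB) hcx
end
end

section
/- The one-point compactification X of the long ray 𝕃₊ is a compact Hausdorff (hence Lindelöf and Hausdorff) space, and the canonical inclusion 𝕃₊ → X is a continuous map that is not eventually constant. (Thus first countability cannot be omitted from the hypotheses of the result that first countable Lindelöf Hausdorff spaces are squat.) -/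
noncomputable section

open Set Topology Filter

universe u

/-! ### Auxiliary development for Statement 6 -/

section Aux

lemma omega1_isLimit : Order.IsSuccLimit ((Cardinal.aleph 1).ord) :=
  Cardinal.isSuccLimit_ord (Cardinal.aleph0_le_aleph 1)

lemma omega1_pos : (0 : Ordinal) < (Cardinal.aleph 1).ord :=
  omega1_isLimit.pos

/-- The bottom element of the closed long ray. -/
def clrBot : ClosedLongRay :=
  toLex (⟨0, omega1_pos⟩, ⟨0, le_refl 0, one_pos⟩)

lemma clr_le_iff (x y : ClosedLongRay) :
    x ≤ y ↔ (ofLex x).1 < (ofLex y).1 ∨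
      (ofLex x).1 = (ofLex y).1 ∧ (ofLex x).2 ≤ (ofLex y).2 :=
  Prod.Lex.le_iff

lemma clr_lt_iff (x y : ClosedLongRay) :
    x < y ↔ (ofLex x).1 < (ofLex y).1 ∨
      (ofLex x).1 = (ofLex y).1 ∧ (ofLex x).2 < (ofLex y).2 :=
  Prod.Lex.lt_iff

lemma clrBot_le (x : ClosedLongRay) : clrBot ≤ x := by
  rw [clr_le_iff]
  rcases eq_or_lt_of_le (show (0:Ordinal) ≤ ((ofLex x).1 : Omega1).1 from zero_le) with h | h
  · exact Or.inr ⟨Subtype.ext h, Subtype.coe_le_coe.1 (ofLex x).2.2.1⟩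
  · exact Or.inl h

instance : NoMaxOrder ClosedLongRay := by
  constructor
  intro x
  have h1 : ((ofLex x).2 : ℝ) < 1 := (ofLex x).2.2.2
  have h0 : (0:ℝ) ≤ ((ofLex x).2 : ℝ) := (ofLex x).2.2.1
  refine ⟨toLex ((ofLex x).1, ⟨(((ofLex x).2 : ℝ) + 1) / 2, by linarith, by linarith⟩), ?_⟩
  refine (clr_lt_iff _ _).2 ?_
  exact Or.inr ⟨rfl, show ((ofLex x).2 : ℝ) < _ by dsimp; linarith⟩

/-- The first (ordinal) coordinate of a point of the closed long ray. -/
def clrFst (x : ClosedLongRay) : Ordinal := ((ofLex x).1 : Omega1).1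

lemma clrFst_le_of_le {x y : ClosedLongRay} (h : x ≤ y) : clrFst x ≤ clrFst y := by
  rcases (clr_le_iff x y).1 h with h | h
  · exact le_of_lt h
  · exact le_of_eq (congrArg Subtype.val h.1)

/-- Existence of least upper bounds in the closed long ray. -/
lemma clr_exists_isLUB (S : Set ClosedLongRay) (hne : S.Nonempty) (hbd : BddAbove S) :
    ∃ x, IsLUB S x := by
  classical
  obtain ⟨b, hb⟩ := hbd
  set A : Set Ordinal := clrFst '' S with hA
  have hAne : A.Nonempty := hne.image _
  have hAbd : BddAbove A := by
    refine ⟨clrFst b, ?_⟩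
    rintro _ ⟨x, hx, rfl⟩
    exact clrFst_le_of_le (hb hx)
  set σ₀ : Ordinal := sSup A with hσ₀
  have hσ₀le : ∀ x ∈ S, clrFst x ≤ σ₀ := fun x hx => le_csSup hAbd ⟨x, hx, rfl⟩
  have hσ₀lt : σ₀ < (Cardinal.aleph 1).ord := by
    refine lt_of_le_of_lt (csSup_le hAne ?_) ((ofLex b).1.2)
    rintro _ ⟨x, hx, rfl⟩
    exact clrFst_le_of_le (hb hx)
  set σ : Omega1 := ⟨σ₀, hσ₀lt⟩ with hσ
  have hσc : ∀ c ∈ upperBounds S, σ₀ ≤ clrFst c := by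
    intro c hc
    refine csSup_le hAne ?_
    rintro _ ⟨x, hx, rfl⟩
    exact clrFst_le_of_le (hc hx)
  set T : Set ℝ := Subtype.val '' {t : Set.Ico (0:ℝ) 1 | toLex (σ, t) ∈ S} with hT
  have hTbd : BddAbove T := by
    refine ⟨1, ?_⟩
    rintro _ ⟨t, _, rfl⟩
    exact t.2.2.le
  have hfst : ∀ x ∈ S, clrFst x = σ₀ → toLex (σ, (ofLex x).2) ∈ S := by
    intro x hx h
    have e1 : (ofLex x).1 = σ := Subtype.ext h
    have e2 : x = toLex (σ, (ofLex x).2) := by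
      rw [← e1]
      exact rfl
    rwa [← e2]
  have hTub : ∀ c ∈ upperBounds S, clrFst c = σ₀ → ((ofLex c).2 : ℝ) ∈ upperBounds T := by
    intro c hc h
    rintro _ ⟨t, ht, rfl⟩
    rcases (clr_le_iff _ _).1 (hc ht) with h' | h'
    · have h2 : σ₀ < clrFst c := Subtype.coe_lt_coe.2 h'
      rw [h] at h2
      exact absurd h2 (lt_irrefl _)
    · exact h'.2
  by_cases hTne : T.Nonempty
  · set τ : ℝ := sSup T with hτ
    obtain ⟨r, hr⟩ := hTne
    have hτ0 : (0:ℝ) ≤ τ := by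
      refine le_trans ?_ (le_csSup hTbd hr)
      obtain ⟨t, _, rfl⟩ := hr
      exact t.2.1
    by_cases hτlt : τ < 1
    · refine ⟨toLex (σ, ⟨τ, hτ0, hτlt⟩), ?_, ?_⟩
      · intro x hx
        refine (clr_le_iff _ _).2 ?_
        rcases lt_or_eq_of_le (hσ₀le x hx) with h | h
        · exact Or.inl h
        · exact Or.inr ⟨Subtype.ext h, Subtype.coe_le_coe.1
            (le_csSup hTbd ⟨(ofLex x).2, hfst x hx h, rfl⟩)⟩
      · intro c hc
        refine (clr_le_iff _ _).2 ?_
        rcases lt_or_eq_of_le (hσc c hc) with h | h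
        · exact Or.inl h
        · refine Or.inr ⟨Subtype.ext h, ?_⟩
          show τ ≤ ((ofLex c).2 : ℝ)
          exact csSup_le ⟨r, hr⟩ (hTub c hc h.symm)
    · have hsucc : σ₀ + 1 < (Cardinal.aleph 1).ord := omega1_isLimit.succ_lt hσ₀lt
      refine ⟨toLex (⟨σ₀ + 1, hsucc⟩, ⟨0, le_refl 0, one_pos⟩), ?_, ?_⟩
      · intro x hx
        refine (clr_le_iff _ _).2 ?_
        exact Or.inl (Subtype.mk_lt_mk.2 (lt_of_le_of_lt (hσ₀le x hx) (Order.lt_succ σ₀)))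
      · intro c hc
        refine (clr_le_iff _ _).2 ?_
        rcases lt_or_eq_of_le (hσc c hc) with h | h
        · rcases lt_or_eq_of_le (Order.add_one_le_of_lt h) with h' | h'
          · exact Or.inl h'
          · exact Or.inr ⟨Subtype.ext h', Subtype.coe_le_coe.1 (ofLex c).2.2.1⟩
        · exfalso
          exact hτlt (lt_of_le_of_lt (csSup_le ⟨r, hr⟩ (hTub c hc h.symm)) (ofLex c).2.2.2)
  · refine ⟨toLex (σ, ⟨0, le_refl 0, one_pos⟩), ?_, ?_⟩
    · intro x hx
      refine (clr_le_iff _ _).2 ?_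
      rcases lt_or_eq_of_le (hσ₀le x hx) with h | h
      · exact Or.inl h
      · exact absurd ⟨(ofLex x).2, hfst x hx h, rfl⟩ (fun hmem => hTne ⟨_, hmem⟩)
    · intro c hc
      refine (clr_le_iff _ _).2 ?_
      rcases lt_or_eq_of_le (hσc c hc) with h | h
      · exact Or.inl h
      · exact Or.inr ⟨Subtype.ext h, Subtype.coe_le_coe.1 (ofLex c).2.2.1⟩

noncomputable instance : SupSet ClosedLongRay :=
  ⟨fun S => @dite _ (S.Nonempty ∧ BddAbove S) (Classical.dec _)
    (fun h => Classical.choose (clr_exists_isLUB S h.1 h.2)) (fun _ => clrBot)⟩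

lemma clr_isLUB_sSup (S : Set ClosedLongRay) (hbd : BddAbove S) (hne : S.Nonempty) :
    IsLUB S (sSup S) := by
  have h : S.Nonempty ∧ BddAbove S := ⟨hne, hbd⟩
  show IsLUB S (@dite _ (S.Nonempty ∧ BddAbove S) (Classical.dec _)
    (fun h => Classical.choose (clr_exists_isLUB S h.1 h.2)) (fun _ => clrBot))
  rw [dif_pos h]
  exact Classical.choose_spec (clr_exists_isLUB S h.1 h.2)

lemma clr_sSup_of_not (S : Set ClosedLongRay) (h : ¬(S.Nonempty ∧ BddAbove S)) :
    sSup S = clrBot := by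
  show (@dite _ (S.Nonempty ∧ BddAbove S) (Classical.dec _)
    (fun h => Classical.choose (clr_exists_isLUB S h.1 h.2)) (fun _ => clrBot)) = clrBot
  rw [dif_neg h]

noncomputable instance : ConditionallyCompleteLinearOrder ClosedLongRay :=
  { conditionallyCompleteLatticeOfLatticeOfsSup ClosedLongRay clr_isLUB_sSup,
    (inferInstance : LinearOrder ClosedLongRay) with
    csSup_of_not_bddAbove := fun s hs => by
      rw [clr_sSup_of_not s (fun h => hs h.2),
        clr_sSup_of_not ∅ (fun h => (Set.not_nonempty_empty h.1))]
    csInf_of_not_bddBelow := fun s hs => absurd ⟨clrBot, fun x _ => clrBot_le x⟩ hs }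

instance : LocallyCompactSpace ClosedLongRay := by
  constructor
  intro x n hn
  obtain ⟨a, c, hx, hn', hsub⟩ := exists_Icc_mem_subset_of_mem_nhds hn
  exact ⟨Set.Icc a c, hn', hsub, isCompact_Icc⟩

lemma isOpen_longRaySet : IsOpen {x : ClosedLongRay | ∃ y, y < x} := by
  have : {x : ClosedLongRay | ∃ y, y < x} = Set.Ioi clrBot := by
    ext x
    exact ⟨fun ⟨y, hy⟩ => lt_of_le_of_lt (clrBot_le y) hy, fun h => ⟨clrBot, h⟩⟩
  rw [this]; exact isOpen_Ioi

instance : LocallyCompactSpace LongRay :=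
  isOpen_longRaySet.locallyCompactSpace

instance : T2Space LongRay :=
  inferInstanceAs (T2Space {x : ClosedLongRay // ∃ y, y < x})

instance : NoMaxOrder LongRay := by
  constructor
  rintro ⟨x, hx⟩
  obtain ⟨y, hy⟩ := exists_gt x
  exact ⟨⟨y, x, hy⟩, Subtype.mk_lt_mk.2 hy⟩

end Aux

/-- The one-point compactification of the long ray is compact and
Hausdorff (hence Lindelöf and Hausdorff), and the canonical inclusion `𝕃₊ → X` is
continuous but not eventually constant. (So first countability cannot be omitted from
the hypotheses of "first countable + Lindelöf + Hausdorff ⟹ squat".) -/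
theorem statement6 :
    CompactSpace (OnePoint LongRay) ∧ T2Space (OnePoint LongRay) ∧
      Continuous ((↑) : LongRay → OnePoint LongRay) ∧
      ¬ ∃ (β : LongRay) (x : OnePoint LongRay),
          ∀ α : LongRay, β ≤ α → (↑α : OnePoint LongRay) = x := by
  refine ⟨inferInstance, inferInstance, OnePoint.continuous_coe, ?_⟩
  rintro ⟨β, x, h⟩
  obtain ⟨γ, hγ⟩ := exists_gt β
  have h1 := h β le_rfl
  have h2 := h γ hγ.le
  exact absurd (OnePoint.coe_injective (h2.trans h1.symm)) hγ.ne'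
end
end

section
/- The long line 𝕃 is sequentially compact: every sequence in 𝕃 has a subsequence converging to a point of 𝕃. Likewise the closed long ray 𝕃≥0 is sequentially compact. -/
noncomputable section

open Set Topology Filter

universe u

namespace S17
lemma O.le_iff {a b : Omega1} : a ≤ b ↔ a.toOrdinal ≤ b.toOrdinal := Iff.rfl
lemma O.lt_iff {a b : Omega1} : a < b ↔ a.toOrdinal < b.toOrdinal := Iff.rfl
lemma O.prop (a : Omega1) : a.toOrdinal < (Cardinal.aleph 1).ord := a.2
lemma O.ext {a b : Omega1} (h : a.toOrdinal = b.toOrdinal) : a = b := Subtype.ext h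
def CLR.fst (x : ClosedLongRay) : Omega1 := (ofLex x).1
def CLR.snd (x : ClosedLongRay) : Set.Ico (0:ℝ) 1 := (ofLex x).2
def CLR.mk (a : Omega1) (t : Set.Ico (0:ℝ) 1) : ClosedLongRay := toLex (a, t)
lemma CLR.le_iff {x y : ClosedLongRay} :
    x ≤ y ↔ CLR.fst x < CLR.fst y ∨ (CLR.fst x = CLR.fst y ∧ CLR.snd x ≤ CLR.snd y) :=
  Prod.Lex.le_iff (x := ofLex x) (y := ofLex y)
lemma CLR.lt_iff {x y : ClosedLongRay} :
    x < y ↔ CLR.fst x < CLR.fst y ∨ (CLR.fst x = CLR.fst y ∧ CLR.snd x < CLR.snd y) :=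
  Prod.Lex.lt_iff (x := ofLex x) (y := ofLex y)
lemma I.le_iff {s t : Set.Ico (0:ℝ) 1} : s ≤ t ↔ s.1 ≤ t.1 := Iff.rfl

/-! new material -/

lemma CLR.fst_mono {x y : ClosedLongRay} (h : x ≤ y) : CLR.fst x ≤ CLR.fst y := by
  rcases CLR.le_iff.mp h with h' | ⟨h', _⟩
  · exact le_of_lt h'
  · exact le_of_eq h'

lemma CLR.snd_le {x y : ClosedLongRay} (h : x ≤ y) (hf : CLR.fst x = CLR.fst y) :
    CLR.snd x ≤ CLR.snd y := by
  rcases CLR.le_iff.mp h with h' | ⟨_, h2⟩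
  · exact absurd h' (by rw [hf]; exact lt_irrefl _)
  · exact h2

lemma CLR.exists_isGLB (S : Set ClosedLongRay) (hS : S.Nonempty) : ∃ a, IsGLB S a := by
  classical
  obtain ⟨o, ⟨x0, hx0S, ho⟩, hmin⟩ :=
    (wellFounded_lt (α := Ordinal.{0})).has_min ((fun x => (CLR.fst x).toOrdinal) '' S)
      (hS.image _)
  have hafst : ∀ x ∈ S, CLR.fst x0 ≤ CLR.fst x := by
    intro x hx
    have ho' : (CLR.fst x0).toOrdinal = o := ho
    rw [O.le_iff, ho']
    exact le_of_not_gt fun h => hmin _ ⟨x, hx, rfl⟩ h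
  set T : Set ℝ := {t | ∃ x ∈ S, CLR.fst x = CLR.fst x0 ∧ (CLR.snd x).1 = t} with hT
  have hTne : (CLR.snd x0).1 ∈ T := ⟨x0, hx0S, rfl, rfl⟩
  have hTlb : ∀ t ∈ T, (0:ℝ) ≤ t := by rintro t ⟨x, _, _, rfl⟩; exact (CLR.snd x).2.1
  have hTbd : BddBelow T := ⟨0, hTlb⟩
  have h0 : (0:ℝ) ≤ sInf T := le_csInf ⟨_, hTne⟩ hTlb
  have h1 : sInf T < 1 := lt_of_le_of_lt (csInf_le hTbd hTne) (CLR.snd x0).2.2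
  refine ⟨CLR.mk (CLR.fst x0) ⟨sInf T, h0, h1⟩, ?_, ?_⟩
  · intro x hx
    rcases lt_or_eq_of_le (hafst x hx) with h | h
    · exact CLR.le_iff.mpr (Or.inl h)
    · refine CLR.le_iff.mpr (Or.inr ⟨h, ?_⟩)
      exact I.le_iff.mpr (csInf_le hTbd ⟨x, hx, h.symm, rfl⟩)
  · intro b hb
    rcases CLR.le_iff.mp (hb hx0S) with h | ⟨h, _⟩
    · exact CLR.le_iff.mpr (Or.inl h)
    · refine CLR.le_iff.mpr (Or.inr ⟨h, I.le_iff.mpr ?_⟩)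
      refine le_csInf ⟨_, hTne⟩ ?_
      rintro t ⟨x, hxS, hfx, rfl⟩
      exact I.le_iff.mp (CLR.snd_le (hb hxS) (by rw [h, hfx]))

lemma CLR.exists_isLUB (S : Set ClosedLongRay) (hS : S.Nonempty) (hbd : BddAbove S) :
    ∃ a, IsLUB S a := by
  classical
  obtain ⟨b, hb⟩ := hbd
  obtain ⟨x1, hx1⟩ := hS
  set Os : Set Ordinal.{0} := (fun x => (CLR.fst x).toOrdinal) '' S with hOsdef
  have hOne : Os.Nonempty := ⟨_, ⟨x1, hx1, rfl⟩⟩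
  have hOub : ∀ o ∈ Os, o ≤ (CLR.fst b).toOrdinal := by
    rintro o ⟨x, hx, rfl⟩
    exact O.le_iff.mp (CLR.fst_mono (hb hx))
  have hObd : BddAbove Os := ⟨_, hOub⟩
  set A := sSup Os with hAdef
  have hA_lt : A < (Cardinal.aleph 1).ord :=
    lt_of_le_of_lt (csSup_le hOne hOub) (O.prop _)
  have hAle : ∀ x ∈ S, (CLR.fst x).toOrdinal ≤ A := fun x hx => le_csSup hObd ⟨x, hx, rfl⟩
  by_cases hatt : ∃ x ∈ S, (CLR.fst x).toOrdinal = A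
  · obtain ⟨xA, hxAS, hxA⟩ := hatt
    set T : Set ℝ := {t | ∃ x ∈ S, CLR.fst x = CLR.fst xA ∧ (CLR.snd x).1 = t} with hT
    have hTne : (CLR.snd xA).1 ∈ T := ⟨xA, hxAS, rfl, rfl⟩
    have hT1 : ∀ t ∈ T, t ≤ (1:ℝ) := by rintro t ⟨x, _, _, rfl⟩; exact le_of_lt (CLR.snd x).2.2
    have hTbd : BddAbove T := ⟨1, hT1⟩
    have hs0 : (0:ℝ) ≤ sSup T := le_trans (CLR.snd xA).2.1 (le_csSup hTbd hTne)
    have hfle : ∀ x ∈ S, CLR.fst x ≤ CLR.fst xA := by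
      intro x hx
      exact O.le_iff.mpr (by rw [hxA]; exact hAle x hx)
    by_cases hslt : sSup T < 1
    · refine ⟨CLR.mk (CLR.fst xA) ⟨sSup T, hs0, hslt⟩, ?_, ?_⟩
      · intro x hx
        rcases lt_or_eq_of_le (hfle x hx) with h | h
        · exact CLR.le_iff.mpr (Or.inl h)
        · exact CLR.le_iff.mpr (Or.inr ⟨h, I.le_iff.mpr (le_csSup hTbd ⟨x, hx, h, rfl⟩)⟩)
      · intro b' hb'
        rcases lt_or_eq_of_le (CLR.fst_mono (hb' hxAS)) with h | h
        · exact CLR.le_iff.mpr (Or.inl h)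
        · refine CLR.le_iff.mpr (Or.inr ⟨h, I.le_iff.mpr ?_⟩)
          refine csSup_le ⟨_, hTne⟩ ?_
          rintro t ⟨x, hxS, hfx, rfl⟩
          exact I.le_iff.mp (CLR.snd_le (hb' hxS) (hfx.trans h))
    · have hs1 : sSup T = 1 := le_antisymm (csSup_le ⟨_, hTne⟩ hT1) (not_lt.mp hslt)
      have hsucc : Order.succ A < (Cardinal.aleph 1).ord :=
        (Cardinal.isSuccLimit_ord (Cardinal.aleph0_le_aleph 1)).succ_lt hA_lt
      refine ⟨CLR.mk ⟨Order.succ A, hsucc⟩ ⟨0, le_refl 0, one_pos⟩, ?_, ?_⟩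
      · intro x hx
        refine CLR.le_iff.mpr (Or.inl (O.lt_iff.mpr ?_))
        exact lt_of_le_of_lt (hAle x hx) (Order.lt_succ A)
      · intro b' hb'
        have hfge : CLR.fst xA ≤ CLR.fst b' := CLR.fst_mono (hb' hxAS)
        rcases lt_or_eq_of_le hfge with h | h
        · have hAlt : A < (CLR.fst b').toOrdinal := by
            rw [← hxA]; exact O.lt_iff.mp h
          rcases lt_or_eq_of_le (Order.succ_le_of_lt hAlt) with h' | h'
          · exact CLR.le_iff.mpr (Or.inl (O.lt_iff.mpr h'))
          · exact CLR.le_iff.mpr (Or.inr ⟨O.ext h', I.le_iff.mpr (CLR.snd b').2.1⟩)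
        · exfalso
          have : sSup T ≤ (CLR.snd b').1 := by
            refine csSup_le ⟨_, hTne⟩ ?_
            rintro t ⟨x, hxS, hfx, rfl⟩
            exact I.le_iff.mp (CLR.snd_le (hb' hxS) (hfx.trans h))
          rw [hs1] at this
          exact absurd (lt_of_le_of_lt this (CLR.snd b').2.2) (lt_irrefl 1)
  · have hAlt : ∀ x ∈ S, (CLR.fst x).toOrdinal < A :=
      fun x hx => lt_of_le_of_ne (hAle x hx) fun h => hatt ⟨x, hx, h⟩
    refine ⟨CLR.mk ⟨A, hA_lt⟩ ⟨0, le_refl 0, one_pos⟩, ?_, ?_⟩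
    · intro x hx
      exact CLR.le_iff.mpr (Or.inl (O.lt_iff.mpr (hAlt x hx)))
    · intro b' hb'
      have : A ≤ (CLR.fst b').toOrdinal := by
        refine csSup_le hOne ?_
        rintro o ⟨x, hx, rfl⟩
        exact O.le_iff.mp (CLR.fst_mono (hb' hx))
      rcases lt_or_eq_of_le this with h | h
      · exact CLR.le_iff.mpr (Or.inl (O.lt_iff.mpr h))
      · exact CLR.le_iff.mpr (Or.inr ⟨O.ext h, I.le_iff.mpr (CLR.snd b').2.1⟩)

def clrBot : ClosedLongRay :=
  CLR.mk ⟨0, (Cardinal.isSuccLimit_ord (Cardinal.aleph0_le_aleph 1)).pos⟩ ⟨0, le_refl 0, one_pos⟩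

lemma clrBot_le (x : ClosedLongRay) : clrBot ≤ x := by
  rcases eq_or_lt_of_le (zero_le : (0 : Ordinal) ≤ (CLR.fst x).toOrdinal) with h | h
  · exact CLR.le_iff.mpr (Or.inr ⟨O.ext h, I.le_iff.mpr (CLR.snd x).2.1⟩)
  · exact CLR.le_iff.mpr (Or.inl (O.lt_iff.mpr h))

lemma CLR.bddAbove_range (u : ℕ → ClosedLongRay) : BddAbove (Set.range u) := by
  set A := ⨆ n, (CLR.fst (u n)).toOrdinal with hA
  have hA_lt : A < (Cardinal.aleph 1).ord :=
    Cardinal.ord_aleph 1 ▸ Ordinal.iSup_lt_omega_one fun n => (Cardinal.ord_aleph 1 ▸ O.prop _)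
  have hsucc : Order.succ A < (Cardinal.aleph 1).ord :=
    (Cardinal.isSuccLimit_ord (Cardinal.aleph0_le_aleph 1)).succ_lt hA_lt
  refine ⟨CLR.mk ⟨Order.succ A, hsucc⟩ ⟨0, le_refl 0, one_pos⟩, ?_⟩
  rintro x ⟨n, rfl⟩
  refine CLR.le_iff.mpr (Or.inl (O.lt_iff.mpr ?_))
  exact lt_of_le_of_lt (Ordinal.le_iSup _ n) (Order.lt_succ A)


/-! ### Long ray and long line order lemmas -/

lemma LR.le_iff {a b : LongRay} : a ≤ b ↔ a.1 ≤ b.1 := Iff.rfl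

lemma LR.exists_isLUB (S : Set LongRay) (hne : S.Nonempty) (hbd : BddAbove S) :
    ∃ a, IsLUB S a := by
  obtain ⟨x, hxS⟩ := hne
  obtain ⟨c, hc⟩ := hbd
  obtain ⟨a, ha⟩ := CLR.exists_isLUB (Subtype.val '' S) ⟨x.1, ⟨x, hxS, rfl⟩⟩
    ⟨c.1, by rintro _ ⟨y, hy, rfl⟩; exact LR.le_iff.mp (hc hy)⟩
  have hmem : ∃ y, y < a := by
    obtain ⟨y, hy⟩ := x.2
    exact ⟨y, lt_of_lt_of_le hy (ha.1 ⟨x, hxS, rfl⟩)⟩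
  refine ⟨⟨a, hmem⟩, ?_, ?_⟩
  · intro z hz
    exact LR.le_iff.mpr (ha.1 ⟨z, hz, rfl⟩)
  · intro b hb
    exact LR.le_iff.mpr (ha.2 (by rintro _ ⟨y, hy, rfl⟩; exact LR.le_iff.mp (hb hy)))

def LL.inl (a : LongRay) : LongLine := toLex (Sum.inl (OrderDual.toDual a))
def LL.inr (b : ClosedLongRay) : LongLine := toLex (Sum.inr b)

lemma LL.cases (z : LongLine) : (∃ a : LongRay, z = LL.inl a) ∨ ∃ b, z = LL.inr b := by
  rcases h : ofLex z with a | b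
  · exact Or.inl ⟨OrderDual.ofDual a, by rw [← toLex_ofLex z, h]; rfl⟩
  · exact Or.inr ⟨b, by rw [← toLex_ofLex z, h]; rfl⟩

lemma LL.inl_le_inl {a b : LongRay} : LL.inl a ≤ LL.inl b ↔ b ≤ a :=
  Sum.Lex.inl_le_inl_iff

lemma LL.inl_le_inr (a : LongRay) (b : ClosedLongRay) : LL.inl a ≤ LL.inr b :=
  Sum.Lex.inl_le_inr _ _

lemma LL.not_inr_le_inl (a : LongRay) (b : ClosedLongRay) : ¬ LL.inr b ≤ LL.inl a :=
  Sum.Lex.not_inr_le_inl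

lemma LL.inr_le_inr {a b : ClosedLongRay} : LL.inr a ≤ LL.inr b ↔ a ≤ b :=
  Sum.Lex.inr_le_inr_iff

lemma LL.exists_isLUB (S : Set LongLine) (hne : S.Nonempty) (hbd : BddAbove S) :
    ∃ a, IsLUB S a := by
  classical
  by_cases hR : {x : ClosedLongRay | LL.inr x ∈ S}.Nonempty
  · have hbd' : BddAbove {x : ClosedLongRay | LL.inr x ∈ S} := by
      obtain ⟨c, hc⟩ := hbd
      rcases LL.cases c with ⟨w, rfl⟩ | ⟨w, rfl⟩
      · obtain ⟨x, hx⟩ := hR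
        exact absurd (hc hx) (LL.not_inr_le_inl _ _)
      · exact ⟨w, fun x hx => LL.inr_le_inr.mp (hc hx)⟩
    obtain ⟨a, ha⟩ := CLR.exists_isLUB _ hR hbd'
    refine ⟨LL.inr a, ?_, ?_⟩
    · intro z hz
      rcases LL.cases z with ⟨w, rfl⟩ | ⟨w, rfl⟩
      · exact LL.inl_le_inr _ _
      · exact LL.inr_le_inr.mpr (ha.1 hz)
    · intro b hb
      rcases LL.cases b with ⟨w, rfl⟩ | ⟨w, rfl⟩
      · obtain ⟨x, hx⟩ := hR
        exact absurd (hb hx) (LL.not_inr_le_inl _ _)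
      · exact LL.inr_le_inr.mpr (ha.2 fun x hx => LL.inr_le_inr.mp (hb hx))
  · have hSL : {a : LongRay | LL.inl a ∈ S}.Nonempty := by
      obtain ⟨z, hz⟩ := hne
      rcases LL.cases z with ⟨a, rfl⟩ | ⟨b, rfl⟩
      · exact ⟨a, hz⟩
      · exact absurd ⟨b, hz⟩ hR
    obtain ⟨g, hg⟩ := CLR.exists_isGLB (Subtype.val '' {a : LongRay | LL.inl a ∈ S})
      (hSL.image _)
    by_cases hgLR : ∃ y, y < g
    · refine ⟨LL.inl ⟨g, hgLR⟩, ?_, ?_⟩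
      · intro z hz
        rcases LL.cases z with ⟨w, rfl⟩ | ⟨w, rfl⟩
        · exact LL.inl_le_inl.mpr (LR.le_iff.mpr (hg.1 ⟨w, hz, rfl⟩))
        · exact (hR ⟨w, hz⟩).elim
      · intro b hb
        rcases LL.cases b with ⟨w, rfl⟩ | ⟨w, rfl⟩
        · refine LL.inl_le_inl.mpr (LR.le_iff.mpr (hg.2 ?_))
          rintro _ ⟨y, hy, rfl⟩
          exact LR.le_iff.mp (LL.inl_le_inl.mp (hb hy))
        · exact LL.inl_le_inr _ _
    · refine ⟨LL.inr g, ?_, ?_⟩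
      · intro z hz
        rcases LL.cases z with ⟨w, rfl⟩ | ⟨w, rfl⟩
        · exact LL.inl_le_inr _ _
        · exact (hR ⟨w, hz⟩).elim
      · intro b hb
        rcases LL.cases b with ⟨w, rfl⟩ | ⟨w, rfl⟩
        · exfalso
          have hwg : w.1 ≤ g := by
            refine hg.2 ?_
            rintro _ ⟨y, hy, rfl⟩
            exact LR.le_iff.mp (LL.inl_le_inl.mp (hb hy))
          obtain ⟨y, hy⟩ := w.2
          exact hgLR ⟨y, lt_of_lt_of_le hy hwg⟩
        · exact LL.inr_le_inr.mpr (le_of_not_gt fun h => hgLR ⟨w, h⟩)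

lemma LL.exists_isGLB (S : Set LongLine) (hne : S.Nonempty) (hbd : BddBelow S) :
    ∃ a, IsGLB S a := by
  classical
  by_cases hL : {a : LongRay | LL.inl a ∈ S}.Nonempty
  · have hbd' : BddAbove {a : LongRay | LL.inl a ∈ S} := by
      obtain ⟨c, hc⟩ := hbd
      rcases LL.cases c with ⟨w, rfl⟩ | ⟨w, rfl⟩
      · exact ⟨w, fun a ha => LL.inl_le_inl.mp (hc ha)⟩
      · obtain ⟨a, ha⟩ := hL
        exact absurd (hc ha) (LL.not_inr_le_inl _ _)
    obtain ⟨q, hq⟩ := LR.exists_isLUB _ hL hbd'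
    refine ⟨LL.inl q, ?_, ?_⟩
    · intro z hz
      rcases LL.cases z with ⟨w, rfl⟩ | ⟨w, rfl⟩
      · exact LL.inl_le_inl.mpr (hq.1 hz)
      · exact LL.inl_le_inr _ _
    · intro b hb
      rcases LL.cases b with ⟨w, rfl⟩ | ⟨w, rfl⟩
      · exact LL.inl_le_inl.mpr (hq.2 fun a ha => LL.inl_le_inl.mp (hb ha))
      · obtain ⟨a, ha⟩ := hL
        exact absurd (hb ha) (LL.not_inr_le_inl _ _)
  · have hSR : {x : ClosedLongRay | LL.inr x ∈ S}.Nonempty := by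
      obtain ⟨z, hz⟩ := hne
      rcases LL.cases z with ⟨a, rfl⟩ | ⟨b, rfl⟩
      · exact absurd ⟨a, hz⟩ hL
      · exact ⟨b, hz⟩
    obtain ⟨g, hg⟩ := CLR.exists_isGLB _ hSR
    refine ⟨LL.inr g, ?_, ?_⟩
    · intro z hz
      rcases LL.cases z with ⟨w, rfl⟩ | ⟨w, rfl⟩
      · exact absurd ⟨w, hz⟩ hL
      · exact LL.inr_le_inr.mpr (hg.1 hz)
    · intro b hb
      rcases LL.cases b with ⟨w, rfl⟩ | ⟨w, rfl⟩
      · exact LL.inl_le_inr _ _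
      · exact LL.inr_le_inr.mpr (hg.2 fun x hx => LL.inr_le_inr.mp (hb hx))

/-- Fold a point of the long line onto the closed long ray. -/
def LL.fold (z : LongLine) : ClosedLongRay :=
  match ofLex z with
  | Sum.inl a => (OrderDual.ofDual a).toCLR
  | Sum.inr b => b

lemma LL.fold_inl (a : LongRay) : LL.fold (LL.inl a) = a.1 := rfl
lemma LL.fold_inr (b : ClosedLongRay) : LL.fold (LL.inr b) = b := rfl

lemma LL.bddAbove_range (u : ℕ → LongLine) : BddAbove (Set.range u) := by
  obtain ⟨m, hm⟩ := CLR.bddAbove_range (LL.fold ∘ u)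
  refine ⟨LL.inr m, ?_⟩
  rintro z ⟨n, rfl⟩
  rcases LL.cases (u n) with ⟨a, hn⟩ | ⟨b, hn⟩
  · rw [hn]; exact LL.inl_le_inr _ _
  · rw [hn]
    refine LL.inr_le_inr.mpr ?_
    have := hm ⟨n, rfl⟩
    rwa [Function.comp_apply, hn, LL.fold_inr] at this

lemma LL.bddBelow_range (u : ℕ → LongLine) : BddBelow (Set.range u) := by
  obtain ⟨m, hm⟩ := CLR.bddAbove_range (LL.fold ∘ u)
  have hsucc : Order.succ (CLR.fst m).toOrdinal < (Cardinal.aleph 1).ord :=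
    (Cardinal.isSuccLimit_ord (Cardinal.aleph0_le_aleph 1)).succ_lt (O.prop _)
  set m2 : ClosedLongRay := CLR.mk ⟨Order.succ (CLR.fst m).toOrdinal, hsucc⟩
    ⟨0, le_refl 0, one_pos⟩ with hm2def
  have hmm2 : m ≤ m2 := CLR.le_iff.mpr (Or.inl (O.lt_iff.mpr (Order.lt_succ _)))
  have hbotm2 : clrBot < m2 := by
    refine CLR.lt_iff.mpr (Or.inl (O.lt_iff.mpr ?_))
    exact lt_of_le_of_lt zero_le (Order.lt_succ _)
  refine ⟨LL.inl ⟨m2, ⟨clrBot, hbotm2⟩⟩, ?_⟩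
  rintro z ⟨n, rfl⟩
  rcases LL.cases (u n) with ⟨a, hn⟩ | ⟨b, hn⟩
  · rw [hn]
    refine LL.inl_le_inl.mpr (LR.le_iff.mpr ?_)
    show a.1 ≤ m2
    have := hm ⟨n, rfl⟩
    rw [Function.comp_apply, hn, LL.fold_inl] at this
    exact le_trans this hmm2
  · rw [hn]; exact LL.inl_le_inr _ _

/-! ### Generic sequential compactness criterion -/

theorem seqCompact_of_complete {X : Type*} [LinearOrder X] [TopologicalSpace X]
    [OrderTopology X]
    (hlub : ∀ S : Set X, S.Nonempty → BddAbove S → ∃ a, IsLUB S a)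
    (hglb : ∀ S : Set X, S.Nonempty → BddBelow S → ∃ a, IsGLB S a)
    (hba : ∀ u : ℕ → X, BddAbove (Set.range u))
    (hbb : ∀ u : ℕ → X, BddBelow (Set.range u)) :
    SeqCompactSpace X := by
  constructor
  intro u _
  haveI : IsTrans X (· ≤ ·) := ⟨fun _ _ _ => le_trans⟩
  obtain ⟨g, hg | hg⟩ := exists_increasing_or_nonincreasing_subseq (· ≤ ·) u
  · have hmono : Monotone (u ∘ g) := by
      intro m n hmn
      rcases lt_or_eq_of_le hmn with h | h
      · exact hg m n h
      · exact le_of_eq (by rw [h])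
    obtain ⟨a, ha⟩ := hlub (Set.range (u ∘ g)) (Set.range_nonempty _) (hba _)
    exact ⟨a, Set.mem_univ a, g, g.strictMono, tendsto_atTop_isLUB hmono ha⟩
  · have hanti : Antitone (u ∘ g) := by
      intro m n hmn
      rcases lt_or_eq_of_le hmn with h | h
      · exact le_of_not_ge (hg m n h)
      · exact le_of_eq (by rw [h])
    obtain ⟨a, ha⟩ := hglb (Set.range (u ∘ g)) (Set.range_nonempty _) (hbb _)
    exact ⟨a, Set.mem_univ a, g, g.strictMono, tendsto_atTop_isGLB hanti ha⟩

end S17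

/-- The long line `𝕃` and the closed long ray `𝕃≥0` are sequentially
compact: every sequence has a subsequence converging to a point. -/
theorem statement17 : SeqCompactSpace LongLine ∧ SeqCompactSpace ClosedLongRay := by
  constructor
  · exact S17.seqCompact_of_complete S17.LL.exists_isLUB S17.LL.exists_isGLB
      S17.LL.bddAbove_range S17.LL.bddBelow_range
  · exact S17.seqCompact_of_complete (fun S h hb => S17.CLR.exists_isLUB S h hb)
      (fun S h _ => S17.CLR.exists_isGLB S h) S17.CLR.bddAbove_range
      (fun u => ⟨S17.clrBot, by rintro x ⟨n, rfl⟩; exact S17.clrBot_le _⟩)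
end
end

section
/- If A and B are two closed unbounded subsets of the long ray 𝕃₊, then A ∩ B ≠ ∅. -/
noncomputable section

open Set Topology Filter

universe u

/-! ### Auxiliary lemmas for statement 18 -/

namespace Statement18Aux

open Cardinal

lemma clr_le_iff (p q : ClosedLongRay) :
    p ≤ q ↔ (ofLex p).1 < (ofLex q).1 ∨
      ((ofLex p).1 = (ofLex q).1 ∧ (ofLex p).2 ≤ (ofLex q).2) :=
  Prod.Lex.le_iff

lemma clr_first_le {p q : ClosedLongRay} (h : p ≤ q) : (ofLex p).1 ≤ (ofLex q).1 := by
  rcases (clr_le_iff p q).1 h with h' | ⟨h', -⟩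
  · exact h'.le
  · exact h'.le

lemma mem_Ico_zero : (0:ℝ) ∈ Set.Ico (0:ℝ) 1 := ⟨le_rfl, zero_lt_one⟩

/-- Every monotone sequence in the closed long ray has a least upper bound. -/
lemma exists_isLUB (x : ℕ → ClosedLongRay) (hx : Monotone x) :
    ∃ L : ClosedLongRay, IsLUB (Set.range x) L := by
  set α : ℕ → Omega1 := fun n => (ofLex (x n)).1 with hα
  have hαmono : Monotone α := fun m n h => clr_first_le (hx h)
  by_cases hev : ∃ N, ∀ n, N ≤ n → α n = α N
  · obtain ⟨N, hN⟩ := hev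
    set a : Omega1 := α N with ha
    set r : ℕ → ℝ := fun n => ((ofLex (x (N + n))).2 : ℝ) with hr
    have hr0 : ∀ n, 0 ≤ r n := fun n => ((ofLex (x (N + n))).2).2.1
    have hr1 : ∀ n, r n < 1 := fun n => ((ofLex (x (N + n))).2).2.2
    have hfirst : ∀ n, (ofLex (x (N + n))).1 = a := fun n => hN (N + n) (Nat.le_add_right _ _)
    have hrmono : Monotone r := by
      intro m n h
      rcases (clr_le_iff _ _).1 (hx (Nat.add_le_add_left h N)) with h' | ⟨-, h'⟩
      · rw [hfirst m, hfirst n] at h'; exact absurd h' (lt_irrefl _)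
      · exact h'
    have hbdd : BddAbove (Set.range r) := ⟨1, by rintro - ⟨n, rfl⟩; exact (hr1 n).le⟩
    set ρ : ℝ := ⨆ n, r n with hρ
    have hρ0 : 0 ≤ ρ := le_trans (hr0 0) (le_ciSup hbdd 0)
    have hρub : ∀ n, r n ≤ ρ := fun n => le_ciSup hbdd n
    have hρ1 : ρ ≤ 1 := ciSup_le fun n => (hr1 n).le
    -- a helper: upper bounds dominate the first coordinate
    have hub_first : ∀ {u : ClosedLongRay}, u ∈ upperBounds (Set.range x) →
        a ≤ (ofLex u).1 := by
      intro u hu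
      have := clr_first_le (hu ⟨N, rfl⟩)
      exact this
    have hub_second : ∀ {u : ClosedLongRay}, u ∈ upperBounds (Set.range x) →
        a = (ofLex u).1 → ∀ n, r n ≤ ((ofLex u).2 : ℝ) := by
      intro u hu heq n
      rcases (clr_le_iff _ _).1 (hu ⟨N + n, rfl⟩) with h' | ⟨-, h'⟩
      · rw [hfirst n, ← heq] at h'; exact absurd h' (lt_irrefl _)
      · exact h'
    by_cases hρlt : ρ < 1
    · refine ⟨toLex (a, ⟨ρ, hρ0, hρlt⟩), ?_, ?_⟩
      · rintro - ⟨n, rfl⟩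
        rcases le_total n N with h | h
        · refine le_trans (hx h) ?_
          apply (clr_le_iff _ _).2
          refine Or.inr ⟨rfl, ?_⟩
          exact Subtype.coe_le_coe.1 (by simpa [hr] using hρub 0)
        · obtain ⟨m, rfl⟩ := Nat.exists_eq_add_of_le h
          apply (clr_le_iff _ _).2
          refine Or.inr ⟨hfirst m, Subtype.coe_le_coe.1 (by simpa [hr] using hρub m)⟩
      · intro u hu
        apply (clr_le_iff _ _).2
        rcases lt_or_eq_of_le (hub_first hu) with h | h
        · exact Or.inl h
        · exact Or.inr ⟨h, Subtype.coe_le_coe.1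
            (by simpa using ciSup_le (hub_second hu h))⟩
    · have hρeq : ρ = 1 := le_antisymm hρ1 (not_lt.1 hρlt)
      have ha1 : a.val + 1 < (Cardinal.aleph 1).ord := by
        rw [Ordinal.add_one_eq_succ]
        exact (Cardinal.isSuccLimit_ord (Cardinal.aleph0_le_aleph 1)).succ_lt a.2
      have haa : a < (⟨a.val + 1, ha1⟩ : Omega1) := by
        apply Subtype.mk_lt_mk.2
        rw [Ordinal.add_one_eq_succ]
        exact Order.lt_succ _
      refine ⟨toLex (⟨a.val + 1, ha1⟩, ⟨0, mem_Ico_zero⟩), ?_, ?_⟩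
      · rintro - ⟨n, rfl⟩
        rcases le_total n N with h | h
        · refine le_trans (hx h) ?_
          apply (clr_le_iff _ _).2
          exact Or.inl haa
        · obtain ⟨m, rfl⟩ := Nat.exists_eq_add_of_le h
          apply (clr_le_iff _ _).2
          exact Or.inl (lt_of_le_of_lt (le_of_eq (hfirst m)) haa)
      · intro u hu
        rcases lt_or_eq_of_le (hub_first hu) with h | h
        · apply (clr_le_iff _ _).2
          have : a.val + 1 ≤ ((ofLex u).1).val := by
            rw [Ordinal.add_one_eq_succ]
            exact Order.succ_le_of_lt (Subtype.coe_lt_coe.2 h)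
          rcases lt_or_eq_of_le this with h' | h'
          · exact Or.inl (Subtype.coe_lt_coe.1 h')
          · exact Or.inr ⟨Subtype.ext h', Subtype.coe_le_coe.1 (by simpa using ((ofLex u).2).2.1)⟩
        · exfalso
          have : (1:ℝ) ≤ ((ofLex u).2 : ℝ) := by
            exact le_trans hρeq.ge (ciSup_le (hub_second hu h))
          exact absurd (lt_of_le_of_lt this ((ofLex u).2).2.2) (lt_irrefl _)
  · push_neg at hev
    set σ : Ordinal := ⨆ n, (α n).val with hσ
    have hσlt : σ < (Cardinal.aleph 1).ord := by
      apply Ordinal.iSup_lt_ord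
      · rw [Cardinal.isRegular_aleph_one.cof_eq, Cardinal.mk_nat]
        exact Cardinal.aleph0_lt_aleph_one
      · exact fun n => (α n).2
    have hlt : ∀ n, (α n).val < σ := by
      intro n
      obtain ⟨m, hm, hne⟩ := hev n
      have h1 : α n < α m := lt_of_le_of_ne (hαmono hm) (fun h => hne (by rw [h]))
      exact lt_of_lt_of_le (Subtype.coe_lt_coe.2 h1) (Ordinal.le_iSup _ m)
    refine ⟨toLex (⟨σ, hσlt⟩, ⟨0, mem_Ico_zero⟩), ?_, ?_⟩
    · rintro - ⟨n, rfl⟩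
      exact (clr_le_iff _ _).2 (Or.inl (Subtype.coe_lt_coe.1 (hlt n)))
    · intro u hu
      have hble : σ ≤ ((ofLex u).1).val :=
        ciSup_le fun n => Subtype.coe_le_coe.2 (clr_first_le (hu ⟨n, rfl⟩))
      apply (clr_le_iff _ _).2
      rcases lt_or_eq_of_le hble with h | h
      · exact Or.inl (Subtype.coe_lt_coe.1 h)
      · exact Or.inr ⟨Subtype.ext h, Subtype.coe_le_coe.1 (by simpa using ((ofLex u).2).2.1)⟩

end Statement18Aux

/-- Two closed unbounded subsets of the long ray `𝕃₊` intersect. -/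
theorem statement18 (A B : Set LongRay) (hA : IsClosed A) (hB : IsClosed B)
    (hAu : ∀ β : LongRay, ∃ α ∈ A, β ≤ α) (hBu : ∀ β : LongRay, ∃ α ∈ B, β ≤ α) :
    (A ∩ B).Nonempty := by
    classical
  choose fA hfAmem hfAle using hAu
  choose fB hfBmem hfBle using hBu
  have h0 : (0:Ordinal) < (Cardinal.aleph 1).ord :=
    Cardinal.lt_ord.2 (by simpa using (Cardinal.aleph_pos 1))
  have h1 : (1:Ordinal) < (Cardinal.aleph 1).ord :=
    Cardinal.lt_ord.2 (by simpa using Cardinal.one_lt_aleph0.trans_le (Cardinal.aleph0_le_aleph 1))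
  let z0 : ClosedLongRay := toLex (⟨0, h0⟩, ⟨0, Statement18Aux.mem_Ico_zero⟩)
  let z1 : ClosedLongRay := toLex (⟨1, h1⟩, ⟨0, Statement18Aux.mem_Ico_zero⟩)
  have hz : z0 < z1 :=
    Prod.Lex.lt_iff.2 (Or.inl (Subtype.mk_lt_mk.2 zero_lt_one))
  let start : LongRay := ⟨z1, ⟨z0, hz⟩⟩
  let x : ℕ → LongRay := fun n =>
    Nat.rec (fA start) (fun n xn => if n % 2 = 0 then fB xn else fA xn) n
  have hxsucc : ∀ n, x (n+1) = if n % 2 = 0 then fB (x n) else fA (x n) := fun n => rfl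
  have hmono : Monotone x := by
    apply monotone_nat_of_le_succ
    intro n
    rw [hxsucc]
    split
    · exact hfBle _
    · exact hfAle _
  have hxA : ∀ n, n % 2 = 0 → x n ∈ A := by
    intro n hn
    rcases n with - | m
    · exact hfAmem start
    · rw [hxsucc]
      have hm : m % 2 = 1 := by omega
      rw [if_neg (by omega)]
      exact hfAmem _
  have hxB : ∀ n, n % 2 = 1 → x n ∈ B := by
    intro n hn
    rcases n with - | m
    · omega
    · rw [hxsucc, if_pos (by omega)]
      exact hfBmem _
  have hmono' : Monotone (fun n => (x n).val) := fun m n h => hmono h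
  obtain ⟨L, hL⟩ := Statement18Aux.exists_isLUB (fun n => (x n).val) hmono'
  have hle0 : (x 0).val ≤ L := hL.1 ⟨0, rfl⟩
  obtain ⟨y, hy⟩ := (x 0).2
  let Lsub : LongRay := ⟨L, ⟨y, lt_of_lt_of_le hy hle0⟩⟩
  have htend : Tendsto x atTop (𝓝 Lsub) := by
    apply tendsto_subtype_rng.2
    exact tendsto_atTop_isLUB hmono' hL
  have h2 : Tendsto (fun n : ℕ => 2 * n) atTop atTop :=
    StrictMono.tendsto_atTop (fun a b h => by omega)
  have h2' : Tendsto (fun n : ℕ => 2 * n + 1) atTop atTop :=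
    StrictMono.tendsto_atTop (fun a b h => by omega)
  have hmemA : Lsub ∈ A :=
    hA.mem_of_tendsto (htend.comp h2)
      (Filter.Eventually.of_forall fun n => hxA (2 * n) (by omega))
  have hmemB : Lsub ∈ B :=
    hB.mem_of_tendsto (htend.comp h2')
      (Filter.Eventually.of_forall fun n => hxB (2 * n + 1) (by omega))
  exact ⟨Lsub, hmemA, hmemB⟩
end
end
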